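/- Let Λ_n (n ∈ ℕ) and Λ be r-uniformly discrete coloured point sets in E, with associated point measures λ_n = Σ_{(x,i)∈Λ_n} δ_{(x,i)} and λ = Σ_{(x,i)∈Λ} δ_{(x,i)}. Then λ_n → λ vaguely (i.e. λ_n(f) → λ(f) for every continuous compactly supported f : E → ℂ) if and only if Λ_n → Λ in the local topology: for all R > 0 and ε > 0 there is N such that for all n ≥ N one has C_R ∩ Λ_n ⊆ C_ε + Λ and C_R ∩ Λ ⊆ C_ε + Λ_n. -/

import Mathlib

open MeasureTheory Filter Topology Set
open scoped RealInnerProductSpace ENNReal NNReal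

noncomputable section

/-- The ambient space `ℝ^d`. -/
abbrev Vd (d : ℕ) := EuclideanSpace ℝ (Fin d)

/-- The coloured space `E = ℝ^d × {1,…,m}`. -/
abbrev Em (d m : ℕ) := EuclideanSpace ℝ (Fin d) × Fin m

/-- The open cube `C_R = (−R/2, R/2)^d`. -/
def cube (d : ℕ) (R : ℝ) : Set (Vd d) := {x | ∀ i, |x i| < R / 2}

/-- Translation of a subset of `ℝ^d` by `t`. -/
def tr {d : ℕ} (t : Vd d) (B : Set (Vd d)) : Set (Vd d) := (fun x => t + x) '' B

/-- Translation of a coloured point set by `t ∈ ℝ^d`. -/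
def trc {d m : ℕ} (t : Vd d) (Λ : Set (Em d m)) : Set (Em d m) :=
  (fun p => (t + p.1, p.2)) '' Λ

/-- `B + Λ` for `B ⊆ ℝ^d` and a coloured point set `Λ`. -/
def addc {d m : ℕ} (B : Set (Vd d)) (Λ : Set (Em d m)) : Set (Em d m) :=
  {p | ∃ b ∈ B, ∃ q ∈ Λ, p = (b + q.1, q.2)}

/-- `B ∩ Λ := {(x,i) ∈ Λ : x ∈ B}`. -/
def restc {d m : ℕ} (B : Set (Vd d)) (Λ : Set (Em d m)) : Set (Em d m) :=
  {p ∈ Λ | p.1 ∈ B}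

/-- A coloured point set is `r`-uniformly discrete: every translate of the cube `C_r`
contains (in `ℝ^d`) at most one point of `Λ`. -/
def UDc {d m : ℕ} (r : ℝ) (Λ : Set (Em d m)) : Prop :=
  ∀ a : Vd d, {p ∈ Λ | p.1 ∈ tr a (cube d r)}.Subsingleton

/-- The colour-`i` section `Λ^i = {x : (x,i) ∈ Λ}`. -/
def sec {d m : ℕ} (i : Fin m) (Λ : Set (Em d m)) : Set (Vd d) := {x | (x, i) ∈ Λ}

/-- The flattening `Λ^↓ = ∪_i Λ^i`. -/
def flat {d m : ℕ} (Λ : Set (Em d m)) : Set (Vd d) := {x | ∃ i, (x, i) ∈ Λ}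

/-- The weighted counting function `N^w_f(Λ) = ∑_i w_i ∑_{x ∈ Λ^i} f x`. -/
def Nw {d m : ℕ} (w : Fin m → ℝ) (f : Vd d → ℂ) (Λ : Set (Em d m)) : ℂ :=
  ∑ i, (w i : ℂ) * ∑' x : sec i Λ, f (x : Vd d)

/-- The vague topology on coloured point sets: the initial topology for the maps
`Λ ↦ ∑_{p ∈ Λ} f p`, `f` continuous with compact support on `E`. -/
def vagueTopC (d m : ℕ) : TopologicalSpace (Set (Em d m)) :=
  ⨅ (f : Em d m → ℂ) (_ : Continuous f) (_ : HasCompactSupport f),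
    TopologicalSpace.induced (fun Λ : Set (Em d m) => ∑' p : Λ, f (p : Em d m)) inferInstance

instance (priority := 2000) instTopConfigC (d m : ℕ) : TopologicalSpace (Set (Em d m)) :=
  vagueTopC d m
instance (priority := 2000) instMeasConfigC (d m : ℕ) : MeasurableSpace (Set (Em d m)) := borel _
instance (priority := 2000) instBorelConfigC (d m : ℕ) : BorelSpace (Set (Em d m)) := ⟨rfl⟩

/-- An `m`-coloured uniformly discrete stationary ergodic point process with hull `X`,
law `μ` and colour intensities `Ii`. -/
structure IsPPc (d m : ℕ) (r : ℝ) (X : Set (Set (Em d m)))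
    (μ : Measure (Set (Em d m))) (Ii : Fin m → ℝ≥0) : Prop where
  nonempty : X.Nonempty
  closedX : IsClosed X
  invX : ∀ t : Vd d, trc t '' X = X
  ud : ∀ Λ ∈ X, UDc r Λ
  prob : IsProbabilityMeasure μ
  suppX : μ Xᶜ = 0
  stationary : ∀ t : Vd d, μ.map (trc t) = μ
  ergodic : ∀ D : Set (Set (Em d m)), MeasurableSet D → (∀ t : Vd d, trc t '' D = D) →
    μ D = 0 ∨ μ D = 1
  Ipos : ∀ i, 0 < Ii i
  intensity : ∀ i, ∀ A : Set (Vd d), MeasurableSet A →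
    ∫⁻ Λ, ((sec i Λ ∩ A).encard : ℝ≥0∞) ∂μ = (Ii i : ℝ≥0∞) * volume A

/-- The family of colour Palm measures `μ̇^(i)`:
`ℓ(B)·μ̇^(i)(D) = ∫_X ∑_{x ∈ Λ^i ∩ B} 1_D(−x+Λ) dμ(Λ)`.  The weighted Palm measure is
`μ̇^w = ∑_i w_i μ̇^(i)`. -/
def IsColourPalm {d m : ℕ} (μ : Measure (Set (Em d m)))
    (μp : Fin m → Measure (Set (Em d m))) : Prop :=
  ∀ i, IsFiniteMeasure (μp i) ∧
    ∀ D : Set (Set (Em d m)), MeasurableSet D → ∀ B : Set (Vd d), MeasurableSet B →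
      0 < volume B → volume B < ⊤ →
      volume B * μp i D =
        ∫⁻ Λ, ∑' x : ↥(sec i Λ ∩ B), D.indicator (fun _ => (1 : ℝ≥0∞)) (trc (-(x : Vd d)) Λ) ∂μ

/-- The character `x ↦ e^{2πi k·x}`. -/
def char {d : ℕ} (k x : Vd d) : ℂ :=
  Complex.exp (2 * Real.pi * Complex.I * ((⟪k, x⟫ : ℝ) : ℂ))

/-- The Fourier transform `f̂(y) = ∫ f(x) e^{−2πi x·y} dx`. -/
def fint {d : ℕ} (f : Vd d → ℂ) (y : Vd d) : ℂ := ∫ x, char x (-y) * f x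

/-- `ω^w` is the diffraction: a translation-bounded positive measure on `ℝ^d` which is the
Fourier transform of the weighted first moment `μ̇^w_1` of the weighted Palm measure, i.e.
`∫ φ dω^w = μ̇^w_1(φ̂) = ∫ N^w_{φ̂} dμ̇^w` for every Schwartz function `φ`. -/
def IsDiffraction {d m : ℕ} (w : Fin m → ℝ) (μp : Fin m → Measure (Set (Em d m)))
    (ω : Measure (Vd d)) : Prop :=
  (∀ K : Set (Vd d), IsCompact K → (⨆ a : Vd d, ω (tr a K)) < ⊤) ∧
  ∀ φ : SchwartzMap (Vd d) ℂ,
    ∫ x, φ x ∂ω = ∑ i, (w i : ℂ) * ∫ Λ, Nw w (fun y => fint (fun x => φ x) y) Λ ∂(μp i)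

-- basic
lemma mem_tr_cube {d : ℕ} {a x : Vd d} {R : ℝ} :
    x ∈ tr a (cube d R) ↔ ∀ j, |x j - a j| < R / 2 := by
  constructor
  · rintro ⟨y, hy, rfl⟩ j
    simpa using hy j
  · intro h
    refine ⟨x - a, fun j => by simpa using h j, ?_⟩
    simp

lemma UDc.eq {d m : ℕ} {r : ℝ} (hr : 0 < r) {Λ : Set (Em d m)} (h : UDc r Λ) {p q : Em d m}
    (hp : p ∈ Λ) (hq : q ∈ Λ) (hpq : ∀ j, |p.1 j - q.1 j| < r / 2) : p = q :=
  h q.1 ⟨hp, mem_tr_cube.2 hpq⟩ ⟨hq, mem_tr_cube.2 fun j => by simpa using half_pos hr⟩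

-- coordinate bounds
lemma abs_coord_le_norm {d : ℕ} (x : Vd d) (j : Fin d) : |x j| ≤ ‖x‖ := by
  rw [EuclideanSpace.norm_eq]
  calc |x j| = Real.sqrt (|x j| ^ 2) := by rw [Real.sqrt_sq (abs_nonneg _)]
  _ ≤ _ := by
      apply Real.sqrt_le_sqrt
      have := Finset.single_le_sum (f := fun i => ‖x i‖ ^ 2)
        (fun i _ => by positivity) (Finset.mem_univ j)
      simpa [Real.norm_eq_abs, sq_abs] using this

lemma norm_le_sqrt_mul {d : ℕ} (x : Vd d) {s : ℝ} (hs : 0 ≤ s) (h : ∀ j, |x j| ≤ s) :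
    ‖x‖ ≤ Real.sqrt d * s := by
  rw [EuclideanSpace.norm_eq]
  calc Real.sqrt (∑ i, ‖x i‖ ^ 2) ≤ Real.sqrt (∑ _i : Fin d, s ^ 2) := by
        apply Real.sqrt_le_sqrt
        apply Finset.sum_le_sum
        intro i _
        have := h i
        rw [Real.norm_eq_abs]
        nlinarith [abs_nonneg (x i)]
  _ = Real.sqrt d * s := by
        rw [Finset.sum_const, Finset.card_univ, Fintype.card_fin, nsmul_eq_mul,
          Real.sqrt_mul (by positivity), Real.sqrt_sq hs]

/-- Integer cell map. -/
def cellOf {d m : ℕ} (r : ℝ) (p : Em d m) : Fin d → ℤ := fun j => ⌊p.1 j / (r / 2)⌋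

lemma cellOf_inj {d m : ℕ} {r : ℝ} (hr : 0 < r) {Λ : Set (Em d m)} (h : UDc r Λ) :
    Set.InjOn (cellOf r) Λ := by
  intro p hp q hq hpq
  refine UDc.eq hr h hp hq fun j => ?_
  have hj : ⌊p.1 j / (r / 2)⌋ = ⌊q.1 j / (r / 2)⌋ := congrFun hpq j
  have h2 : (0:ℝ) < r / 2 := half_pos hr
  have h1 := Int.floor_le (p.1 j / (r / 2))
  have h1' := Int.lt_floor_add_one (p.1 j / (r / 2))
  have h3 := Int.floor_le (q.1 j / (r / 2))
  have h3' := Int.lt_floor_add_one (q.1 j / (r / 2))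
  rw [hj] at h1 h1'
  rw [abs_lt]
  have hp' : p.1 j < (⌊q.1 j / (r / 2)⌋ + 1) * (r/2) := by
    exact (div_lt_iff₀ h2).1 h1'
  have hp'' : (⌊q.1 j / (r / 2)⌋ : ℝ) * (r/2) ≤ p.1 j := by
    exact (le_div_iff₀ h2).1 h1
  have hq' : q.1 j < (⌊q.1 j / (r / 2)⌋ + 1) * (r/2) := by
    exact (div_lt_iff₀ h2).1 h3'
  have hq'' : (⌊q.1 j / (r / 2)⌋ : ℝ) * (r/2) ≤ q.1 j := by
    exact (le_div_iff₀ h2).1 h3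
  constructor <;> nlinarith

/-- The cardinality bound for points of an `r`-UD set with all coordinates `≤ c`. -/
def cardBound (d : ℕ) (r c : ℝ) : ℕ :=
  (Set.pi Set.univ fun _ : Fin d => Set.Icc (⌊(-c) / (r / 2)⌋) ⌊c / (r / 2)⌋).ncard

lemma cardBound_finite (d : ℕ) (r c : ℝ) :
    (Set.pi Set.univ fun _ : Fin d => Set.Icc (⌊(-c) / (r / 2)⌋) ⌊c / (r / 2)⌋).Finite :=
  Set.Finite.pi fun _ => Set.finite_Icc _ _

lemma restc_finite {d m : ℕ} {r : ℝ} (hr : 0 < r) {Λ : Set (Em d m)} (h : UDc r Λ)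
    {S : Set (Em d m)} (hS : S ⊆ Λ) {c : ℝ} (hc : ∀ p ∈ S, ∀ j, |p.1 j| ≤ c) :
    S.Finite ∧ S.ncard ≤ cardBound d r c := by
  have h2 : (0:ℝ) < r / 2 := half_pos hr
  have hinj : Set.InjOn (cellOf r) S := (cellOf_inj hr h).mono hS
  have himg : cellOf r '' S ⊆
      Set.pi Set.univ fun _ : Fin d => Set.Icc (⌊(-c) / (r / 2)⌋) ⌊c / (r / 2)⌋ := by
    rintro _ ⟨p, hp, rfl⟩ j _
    have := hc p hp j
    rw [abs_le] at this
    constructor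
    · exact Int.floor_le_floor (by apply div_le_div_of_nonneg_right this.1 h2.le)
    · exact Int.floor_le_floor (by apply div_le_div_of_nonneg_right this.2 h2.le)
  have hfin : S.Finite := by
    refine Set.Finite.of_finite_image ?_ hinj
    exact (cardBound_finite d r c).subset himg
  refine ⟨hfin, ?_⟩
  calc S.ncard = (cellOf r '' S).ncard := (Set.ncard_image_of_injOn hinj).symm
  _ ≤ _ := Set.ncard_le_ncard himg (cardBound_finite d r c)

lemma tsum_subtype_eq_sum {d m : ℕ} {Λ S : Set (Em d m)} (f : Em d m → ℂ)
    (hS : S.Finite) (hSΛ : S ⊆ Λ) (hsupp : ∀ p ∈ Λ, f p ≠ 0 → p ∈ S) :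
    ∑' p : Λ, f (p : Em d m) = ∑ p ∈ hS.toFinset, f p := by
  rw [tsum_subtype]
  have h0 : ∀ b ∉ hS.toFinset, Λ.indicator f b = 0 := by
    intro b hb
    rw [Set.Finite.mem_toFinset] at hb
    by_cases hbΛ : b ∈ Λ
    · rw [Set.indicator_of_mem hbΛ]
      by_contra hne
      exact hb (hsupp b hbΛ hne)
    · exact Set.indicator_of_notMem hbΛ _
  rw [tsum_eq_sum h0]
  exact Finset.sum_congr rfl fun p hp => Set.indicator_of_mem (hSΛ (hS.mem_toFinset.1 hp)) f

/-- Build a coloured function from real colour components. -/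
def mkF {d m : ℕ} (G : Fin m → Vd d → ℝ) : Em d m → ℂ := fun p => ((G p.2 p.1 : ℝ) : ℂ)

lemma continuous_mkF {d m : ℕ} {G : Fin m → Vd d → ℝ} (hG : ∀ i, Continuous (G i)) :
    Continuous (mkF G) := by
  have : mkF G = fun p : Em d m => ∑ i : Fin m, ((G i p.1 : ℝ) : ℂ) * (if p.2 = i then 1 else 0) := by
    funext p
    simp [mkF, Finset.sum_ite_eq]
  rw [this]
  refine continuous_finset_sum _ fun i _ => Continuous.mul ?_ ?_
  · exact Complex.continuous_ofReal.comp ((hG i).comp continuous_fst)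
  · exact (continuous_of_discreteTopology (α := Fin m)
      (f := fun j => if j = i then (1:ℂ) else 0)).comp continuous_snd

lemma hasCompactSupport_mkF {d m : ℕ} {G : Fin m → Vd d → ℝ} {K : Set (Vd d)}
    (hK : IsCompact K) (h0 : ∀ i y, G i y ≠ 0 → y ∈ K) : HasCompactSupport (mkF G) := by
  refine HasCompactSupport.intro (hK.prod (isCompact_univ (X := Fin m))) fun p hp => ?_
  have : G p.2 p.1 = 0 := by
    by_contra hne
    exact hp ⟨h0 _ _ hne, Set.mem_univ _⟩
  simp [mkF, this]

lemma coord_sub {d : ℕ} (x y : Vd d) (j : Fin d) : (x - y) j = x j - y j := rfl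
lemma coord_add {d : ℕ} (x y : Vd d) (j : Fin d) : (x + y) j = x j + y j := rfl

lemma cube_mono {d : ℕ} {R R' : ℝ} (h : R ≤ R') : cube d R ⊆ cube d R' :=
  fun x hx j => lt_of_lt_of_le (hx j) (by linarith)

lemma addc_mono {d m : ℕ} {B B' : Set (Vd d)} (h : B ⊆ B') (Λ : Set (Em d m)) :
    addc B Λ ⊆ addc B' Λ := by
  rintro p ⟨b, hb, q, hq, rfl⟩
  exact ⟨b, h hb, q, hq, rfl⟩

lemma partA {d m : ℕ} {r : ℝ} (hr : 0 < r) {Λs : ℕ → Set (Em d m)} {Λ : Set (Em d m)}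
    (hΛ : UDc r Λ)
    (hv : ∀ f : Em d m → ℂ, Continuous f → HasCompactSupport f →
        Tendsto (fun n => ∑' p : (Λs n), f (p : Em d m)) atTop (𝓝 (∑' p : Λ, f (p : Em d m))))
    (R ε : ℝ) (hε : 0 < ε) (hεr : ε ≤ r / 2) :
    ∀ᶠ n in atTop, restc (cube d R) Λ ⊆ addc (cube d ε) (Λs n) := by
  classical
  set F : Set (Em d m) := {p ∈ Λ | p.1 ∈ cube d R} with hF
  have hFsub : F ⊆ Λ := Set.sep_subset _ _
  have hFfin : F.Finite :=
    (restc_finite hr hΛ hFsub (c := R / 2) fun p hp j => (hp.2 j).le).1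
  have key : ∀ p ∈ F, ∀ᶠ n in atTop, p ∈ addc (cube d ε) (Λs n) := by
    intro p hp
    set G : Fin m → Vd d → ℝ :=
      fun i y => if i = p.2 then max 0 (1 - (2 / ε) * dist y p.1) else 0 with hG
    have hGc : ∀ i, Continuous (G i) := by
      intro i
      simp only [hG]
      split_ifs
      · exact continuous_const.max
          (continuous_const.sub (continuous_const.mul (continuous_id.dist continuous_const)))
      · exact continuous_const
    have hstrict : ∀ i y, G i y ≠ 0 → dist y p.1 < ε / 2 := by
      intro i y hy
      simp only [hG] at hy
      split_ifs at hy
      · have hpos : 0 < 1 - (2 / ε) * dist y p.1 := by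
          by_contra hle
          push_neg at hle
          exact hy (max_eq_left hle)
        have h2 : (2 / ε) * dist y p.1 < 1 := by linarith
        calc dist y p.1 = (ε / 2) * ((2 / ε) * dist y p.1) := by field_simp
        _ < (ε / 2) * 1 := by
            exact mul_lt_mul_of_pos_left h2 (by positivity)
        _ = ε / 2 := mul_one _
      · exact absurd rfl hy
    have hGsupp : ∀ i y, G i y ≠ 0 → y ∈ Metric.closedBall p.1 (ε / 2) :=
      fun i y hy => Metric.mem_closedBall.2 (hstrict i y hy).le
    have hcolfn : ∀ q : Em d m, mkF G q ≠ 0 → q.2 = p.2 := by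
      intro q hfq
      have hGq : G q.2 q.1 ≠ 0 := fun h => hfq (by simp [mkF, h])
      by_contra hne
      simp only [hG, if_neg hne] at hGq
      exact hGq rfl
    have hdistfn : ∀ q : Em d m, mkF G q ≠ 0 → dist q.1 p.1 < ε / 2 := by
      intro q hfq
      exact hstrict q.2 q.1 (fun h => hfq (by simp [mkF, h]))
    have hnear : ∀ q : Em d m, q ∈ Λ → mkF G q ≠ 0 → q = p := by
      intro q hq hfq
      refine UDc.eq hr hΛ hq hp.1 fun j => ?_
      have h1 : |q.1 j - p.1 j| ≤ ‖q.1 - p.1‖ := by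
        have := abs_coord_le_norm (q.1 - p.1) j
        rwa [coord_sub] at this
      rw [← dist_eq_norm] at h1
      have := hdistfn q hfq
      have h3 : |q.1 j - p.1 j| < ε / 2 := lt_of_le_of_lt h1 this
      linarith
    have hval : (∑' q : Λ, mkF G (q : Em d m)) = 1 := by
      have hf1 : mkF G p = 1 := by
        simp [mkF, hG, dist_self]
      rw [tsum_subtype_eq_sum (S := {p}) (mkF G) (Set.finite_singleton p)
        (Set.singleton_subset_iff.2 hp.1) (fun q hq hfq => hnear q hq hfq)]
      simp [hf1]
    have htend := hv (mkF G) (continuous_mkF hGc)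
      (hasCompactSupport_mkF (isCompact_closedBall _ _) hGsupp)
    rw [hval] at htend
    have hne := htend.eventually_ne (one_ne_zero)
    filter_upwards [hne] with n hn
    have hex : ∃ q : (Λs n), mkF G (q : Em d m) ≠ 0 := by
      by_contra hc
      push_neg at hc
      apply hn
      have : (fun q : (Λs n) => mkF G (q : Em d m)) = fun _ => 0 := funext hc
      rw [this, tsum_zero]
    obtain ⟨⟨q, hqΛ⟩, hfq⟩ := hex
    have hcol : q.2 = p.2 := hcolfn q hfq
    have hdist : dist q.1 p.1 < ε / 2 := hdistfn q hfq
    refine ⟨p.1 - q.1, fun j => ?_, q, hqΛ, ?_⟩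
    · rw [coord_sub]
      have h1 : |p.1 j - q.1 j| ≤ ‖p.1 - q.1‖ := by
        have := abs_coord_le_norm (p.1 - q.1) j
        rwa [coord_sub] at this
      rw [← dist_eq_norm, dist_comm] at h1
      exact lt_of_le_of_lt h1 hdist
    · refine Prod.ext ?_ hcol.symm
      simp
  have := (eventually_all_finite hFfin).2 key
  filter_upwards [this] with n hn q hq
  exact hn q hq

lemma partB {d m : ℕ} {r : ℝ} (hr : 0 < r) {Λs : ℕ → Set (Em d m)} {Λ : Set (Em d m)}
    (hΛs : ∀ n, UDc r (Λs n)) (hΛ : UDc r Λ)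
    (hv : ∀ f : Em d m → ℂ, Continuous f → HasCompactSupport f →
        Tendsto (fun n => ∑' p : (Λs n), f (p : Em d m)) atTop (𝓝 (∑' p : Λ, f (p : Em d m))))
    (R ε : ℝ) (hR : 0 < R) (hε : 0 < ε) (hεr : ε ≤ r / 2) :
    ∀ᶠ n in atTop, restc (cube d R) (Λs n) ⊆ addc (cube d ε) Λ := by
  classical
  set c1 : ℝ := Real.sqrt d * (R / 2) + 1 with hc1
  have hc1pos : 0 < c1 := by positivity
  set δ : ℝ := ε / 2 with hδdef
  have hδ : 0 < δ := by positivity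
  -- the near points of Λ of each colour
  have hSifin : ∀ i : Fin m, ({p ∈ Λ | p.2 = i ∧ dist p.1 0 ≤ c1}).Finite := by
    intro i
    refine (restc_finite hr hΛ (fun p hp => hp.1) (c := c1) fun p hp j => ?_).1
    calc |p.1 j| ≤ ‖p.1‖ := abs_coord_le_norm _ _
    _ = dist p.1 0 := (dist_zero_right _).symm
    _ ≤ c1 := hp.2.2
  have hFifin : ∀ i : Fin m, ((Prod.fst '' {p ∈ Λ | p.2 = i ∧ dist p.1 0 ≤ c1})).Finite :=
    fun i => (hSifin i).image _
  set G : Fin m → Vd d → ℝ := fun i y =>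
    max 0 (min 1 (c1 - dist y 0)) *
      ∏ x ∈ (hFifin i).toFinset, min 1 (dist y x / δ) with hG
  have hGnonneg : ∀ i y, 0 ≤ G i y := by
    intro i y
    refine mul_nonneg (le_max_left _ _) (Finset.prod_nonneg fun x _ => ?_)
    exact le_min zero_le_one (by positivity)
  have hGc : ∀ i, Continuous (G i) := by
    intro i
    refine Continuous.mul ?_ ?_
    · exact continuous_const.max
        (continuous_const.min (continuous_const.sub (continuous_id.dist continuous_const)))
    · exact continuous_finset_prod _ fun x _ =>
        continuous_const.min ((continuous_id.dist continuous_const).div_const δ)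
  have hGsupp : ∀ i y, G i y ≠ 0 → y ∈ Metric.closedBall (0 : Vd d) c1 := by
    intro i y hy
    rw [Metric.mem_closedBall]
    by_contra hgt
    push_neg at hgt
    apply hy
    have h1 : min 1 (c1 - dist y 0) ≤ 0 := (min_le_right _ _).trans (by linarith)
    simp only [hG]
    rw [max_eq_left h1, zero_mul]
  -- the limit value is 0
  have hzero : ∀ q : Em d m, q ∈ Λ → mkF G q = 0 := by
    intro q hq
    have : G q.2 q.1 = 0 := by
      by_cases hq1 : dist q.1 0 ≤ c1
      · have hmem : q.1 ∈ (hFifin q.2).toFinset := by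
          rw [Set.Finite.mem_toFinset]
          exact ⟨q, ⟨hq, rfl, hq1⟩, rfl⟩
        have : (∏ x ∈ (hFifin q.2).toFinset, min 1 (dist q.1 x / δ)) = 0 := by
          refine Finset.prod_eq_zero hmem ?_
          rw [dist_self, zero_div]
          exact min_eq_right zero_le_one
        simp only [hG]
        rw [this, mul_zero]
      · push_neg at hq1
        have h1 : min 1 (c1 - dist q.1 0) ≤ 0 := (min_le_right _ _).trans (by linarith)
        simp only [hG]
        rw [max_eq_left h1, zero_mul]
    simp [mkF, this]
  have hval : (∑' q : Λ, mkF G (q : Em d m)) = 0 := by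
    rw [tsum_subtype_eq_sum (S := ∅) (mkF G) Set.finite_empty (Set.empty_subset _)
      (fun q hq hfq => absurd (hzero q hq) hfq)]
    simp
  -- along cube R, away from Λ, the function is 1
  have hone : ∀ q : Em d m, q.1 ∈ cube d R → q ∉ addc (cube d ε) Λ → G q.2 q.1 = 1 := by
    intro q hqc hqa
    have hnorm : ‖q.1‖ ≤ Real.sqrt d * (R / 2) :=
      norm_le_sqrt_mul q.1 (by positivity) fun j => (hqc j).le
    have hmax : max 0 (min 1 (c1 - dist q.1 0)) = 1 := by
      rw [dist_zero_right]
      have : min 1 (c1 - ‖q.1‖) = 1 := min_eq_left (by rw [hc1]; linarith)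
      rw [this]
      exact max_eq_right zero_le_one
    have hprod : (∏ x ∈ (hFifin q.2).toFinset, min 1 (dist q.1 x / δ)) = 1 := by
      refine Finset.prod_eq_one fun x hx => ?_
      rw [Set.Finite.mem_toFinset] at hx
      obtain ⟨p0, hp0, rfl⟩ := hx
      -- q is not near p0
      have hfar : ∃ j, δ ≤ |q.1 j - p0.1 j| := by
        by_contra hcl
        push_neg at hcl
        apply hqa
        refine ⟨q.1 - p0.1, fun j => ?_, p0, hp0.1, ?_⟩
        · rw [coord_sub]
          exact lt_of_lt_of_le (hcl j) hδdef.le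
        · have h5 : q.1 = q.1 - p0.1 + p0.1 := by simp
          exact Prod.ext h5 hp0.2.1.symm
      obtain ⟨j, hj⟩ := hfar
      have hd1 : δ ≤ dist q.1 p0.1 := by
        rw [dist_eq_norm]
        refine hj.trans ?_
        have := abs_coord_le_norm (q.1 - p0.1) j
        rwa [coord_sub] at this
      refine min_eq_left ?_
      rw [le_div_iff₀ hδ, one_mul]
      exact hd1
    simp only [hG]
    rw [hmax, hprod, mul_one]
  have htend := hv (mkF G) (continuous_mkF hGc)
    (hasCompactSupport_mkF (isCompact_closedBall _ _) hGsupp)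
  rw [hval] at htend
  have hev : ∀ᶠ n in atTop, ‖(∑' p : (Λs n), mkF G (p : Em d m))‖ < 1 := by
    have hball : Metric.ball (0:ℂ) 1 ∈ 𝓝 (0:ℂ) := Metric.ball_mem_nhds _ one_pos
    filter_upwards [htend.eventually_mem hball] with n hn
    rwa [Metric.mem_ball, dist_zero_right] at hn
  filter_upwards [hev] with n hn
  intro q hq
  by_contra hqa
  obtain ⟨hqΛn, hqc⟩ := hq
  -- the sum over Λs n is ≥ 1
  set T : Set (Em d m) := {p ∈ Λs n | dist p.1 0 ≤ c1} with hT
  have hTfin : T.Finite := by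
    refine (restc_finite hr (hΛs n) (fun p hp => hp.1) (c := c1) fun p hp j => ?_).1
    calc |p.1 j| ≤ ‖p.1‖ := abs_coord_le_norm _ _
    _ = dist p.1 0 := (dist_zero_right _).symm
    _ ≤ c1 := hp.2
  have hsum : (∑' p : (Λs n), mkF G (p : Em d m)) = ∑ p ∈ hTfin.toFinset, mkF G p := by
    refine tsum_subtype_eq_sum (mkF G) hTfin (fun p hp => hp.1) fun p hp hfp => ?_
    refine ⟨hp, ?_⟩
    have : G p.2 p.1 ≠ 0 := fun h => hfp (by simp [mkF, h])
    have := hGsupp p.2 p.1 this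
    rwa [Metric.mem_closedBall, ← dist_zero_right] at *
  have hqT : q ∈ hTfin.toFinset := by
    rw [Set.Finite.mem_toFinset]
    refine ⟨hqΛn, ?_⟩
    rw [dist_zero_right]
    calc ‖q.1‖ ≤ Real.sqrt d * (R / 2) :=
          norm_le_sqrt_mul q.1 (by positivity) fun j => (hqc j).le
    _ ≤ c1 := by rw [hc1]; linarith
  have hreal : ∑ p ∈ hTfin.toFinset, mkF G p = ((∑ p ∈ hTfin.toFinset, G p.2 p.1 : ℝ) : ℂ) := by
    rw [Complex.ofReal_sum]
    rfl
  have hge : (1 : ℝ) ≤ ∑ p ∈ hTfin.toFinset, G p.2 p.1 := by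
    have h1 : G q.2 q.1 = 1 := hone q hqc hqa
    calc (1:ℝ) = G q.2 q.1 := h1.symm
    _ ≤ _ := Finset.single_le_sum (f := fun p : Em d m => G p.2 p.1)
        (fun p _ => hGnonneg p.2 p.1) hqT
  rw [hsum, hreal] at hn
  rw [Complex.norm_real, Real.norm_eq_abs] at hn
  have := le_abs_self (∑ p ∈ hTfin.toFinset, G p.2 p.1)
  linarith

lemma backward {d m : ℕ} (hm : 0 < m) {r : ℝ} (hr : 0 < r) {Λs : ℕ → Set (Em d m)} {Λ : Set (Em d m)}
    (hΛs : ∀ n, UDc r (Λs n)) (hΛ : UDc r Λ)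
    (hloc : ∀ R > (0 : ℝ), ∀ ε > (0 : ℝ), ∃ N : ℕ, ∀ n ≥ N,
        restc (cube d R) (Λs n) ⊆ addc (cube d ε) Λ ∧
        restc (cube d R) Λ ⊆ addc (cube d ε) (Λs n))
    (f : Em d m → ℂ) (hfc : Continuous f) (hfcs : HasCompactSupport f) :
    Tendsto (fun n => ∑' p : (Λs n), f (p : Em d m)) atTop (𝓝 (∑' p : Λ, f (p : Em d m))) := by
  classical
  -- support bound
  obtain ⟨c0, hc0⟩ := (hfcs.image continuous_fst).isBounded.subset_closedBall 0
  set c : ℝ := max c0 0 with hc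
  have hcn : 0 ≤ c := le_max_right _ _
  have hsupp : ∀ p : Em d m, f p ≠ 0 → ∀ j, |p.1 j| ≤ c := by
    intro p hp j
    have h1 : p ∈ tsupport f := subset_tsupport f hp
    have h2 : p.1 ∈ Metric.closedBall (0 : Vd d) c0 := hc0 ⟨p, h1, rfl⟩
    rw [Metric.mem_closedBall, dist_zero_right] at h2
    exact (abs_coord_le_norm _ _).trans (h2.trans (le_max_left _ _))
  set R1 : ℝ := 2 * c + 2 + r with hR1
  set R2 : ℝ := 2 * c + 2 + 2 * r with hR2
  have hR2pos : 0 < R2 := by positivity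
  set M : ℕ := cardBound d r (R1 / 2) with hM
  rw [Metric.tendsto_atTop]
  intro η hη
  set η' : ℝ := η / (2 * ((M : ℝ) + 1)) with hη'
  have hη'pos : 0 < η' := by positivity
  -- per-colour uniform continuity
  haveI : Nonempty (Fin m) := ⟨⟨0, hm⟩⟩
  set fi : Fin m → Vd d → ℂ := fun i y => f (y, i) with hfi
  have hfic : ∀ i, Continuous (fi i) :=
    fun i => hfc.comp (continuous_id.prodMk continuous_const)
  have hfics : ∀ i, HasCompactSupport (fi i) := by
    intro i
    refine HasCompactSupport.intro (hfcs.image continuous_fst) fun y hy => ?_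
    by_contra h0
    exact hy ⟨(y, i), subset_tsupport f h0, rfl⟩
  have huc : ∀ i : Fin m, ∃ δi > 0, ∀ {a b : Vd d},
      dist a b < δi → dist (fi i a) (fi i b) < η' := by
    intro i
    have h := ((hfic i).uniformContinuous_of_tendsto_cocompact (hfics i).is_zero_at_infty)
    rw [Metric.uniformContinuous_iff] at h
    exact h η' hη'pos
  choose δf hδf hδf' using huc
  set δ : ℝ := Finset.univ.inf' Finset.univ_nonempty δf with hδdef
  have hδ : 0 < δ := by
    rw [hδdef, Finset.lt_inf'_iff]
    exact fun i _ => hδf i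
  have hδ' : ∀ p q : Em d m, p.2 = q.2 → dist p.1 q.1 < δ → dist (f p) (f q) < η' := by
    intro p q hcol hlt
    have h1 : dist p.1 q.1 < δf p.2 :=
      lt_of_lt_of_le hlt (by rw [hδdef]; exact Finset.inf'_le _ (Finset.mem_univ _))
    have h2 := hδf' p.2 h1
    simp only [hfi] at h2
    have e1 : ((p.1, p.2) : Em d m) = p := Prod.mk.eta
    have e2 : ((q.1, p.2) : Em d m) = q := by rw [hcol]
    rwa [e1, e2] at h2
  set ε : ℝ := min (δ / (Real.sqrt d + 1)) (r / 2) with hε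
  have hεpos : 0 < ε := lt_min (by positivity) (by positivity)
  have hεr : ε ≤ r / 2 := min_le_right _ _
  have hεδ : Real.sqrt d * (ε / 2) < δ := by
    have h1 : ε * (Real.sqrt d + 1) ≤ δ := by
      rw [← le_div_iff₀ (by positivity)]
      exact min_le_left _ _
    nlinarith [Real.sqrt_nonneg (d : ℝ), hδ, hεpos]
  obtain ⟨N, hN⟩ := hloc R2 hR2pos ε hεpos
  refine ⟨N, fun n hn => ?_⟩
  obtain ⟨hBn2, hB'2⟩ := hN n hn
  -- the two relevant finite sets
  set Bn : Set (Em d m) := {p ∈ Λs n | p.1 ∈ cube d R1} with hBn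
  set B' : Set (Em d m) := {p ∈ Λ | p.1 ∈ cube d R2} with hB'
  obtain ⟨hBnfin, hBncard⟩ := restc_finite hr (hΛs n) (Set.sep_subset _ _ : Bn ⊆ Λs n)
    (c := R1 / 2) (fun p hp j => (hp.2 j).le)
  have hB'fin : B'.Finite := (restc_finite hr hΛ (Set.sep_subset _ _ : B' ⊆ Λ)
    (c := R2 / 2) (fun p hp j => (hp.2 j).le)).1
  -- the two tsums as finite sums
  have hsum1 : (∑' p : (Λs n), f (p : Em d m)) = ∑ p ∈ hBnfin.toFinset, f p := by
    refine tsum_subtype_eq_sum f hBnfin (Set.sep_subset _ _) fun p hp hfp => ?_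
    refine ⟨hp, fun j => ?_⟩
    calc |p.1 j| ≤ c := hsupp p hfp j
    _ < R1 / 2 := by rw [hR1]; linarith
  have hsum2 : (∑' p : Λ, f (p : Em d m)) = ∑ q ∈ hB'fin.toFinset, f q := by
    refine tsum_subtype_eq_sum f hB'fin (Set.sep_subset _ _) fun p hp hfp => ?_
    refine ⟨hp, fun j => ?_⟩
    calc |p.1 j| ≤ c := hsupp p hfp j
    _ < R2 / 2 := by rw [hR2]; linarith
  -- matching function
  have hqex : ∀ p ∈ addc (cube d ε) Λ, ∃ q, q ∈ Λ ∧ q.2 = p.2 ∧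
      ∀ j, |p.1 j - q.1 j| < ε / 2 := by
    rintro p ⟨b, hb, q, hq, rfl⟩
    refine ⟨q, hq, rfl, fun j => ?_⟩
    have : (b + q.1) j - q.1 j = b j := by rw [coord_add]; ring
    rw [this]
    exact hb j
  set qm : Em d m → Em d m :=
    fun p => if h : p ∈ addc (cube d ε) Λ then (hqex p h).choose else p with hqm
  have hqmspec : ∀ p ∈ addc (cube d ε) Λ, qm p ∈ Λ ∧ (qm p).2 = p.2 ∧
      ∀ j, |p.1 j - (qm p).1 j| < ε / 2 := by
    intro p h
    simp only [hqm, dif_pos h]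
    exact (hqex p h).choose_spec
  -- Bn is inside the domain
  have hBndom : ∀ p ∈ Bn, p ∈ addc (cube d ε) Λ := by
    intro p hp
    exact hBn2 ⟨hp.1, cube_mono (by rw [hR1, hR2]; linarith) hp.2⟩
  -- (k1) image in B'
  have hk1 : ∀ p ∈ Bn, qm p ∈ B' := by
    intro p hp
    obtain ⟨h1, h2, h3⟩ := hqmspec p (hBndom p hp)
    refine ⟨h1, fun j => ?_⟩
    have := hp.2 j
    have h4 := h3 j
    have : |(qm p).1 j| < R1 / 2 + ε / 2 := by
      have := abs_sub_abs_le_abs_sub ((qm p).1 j) (p.1 j)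
      rw [abs_sub_comm] at h4
      linarith [abs_sub_abs_le_abs_sub ((qm p).1 j) (p.1 j), hp.2 j]
    calc |(qm p).1 j| < R1 / 2 + ε / 2 := this
    _ ≤ R2 / 2 := by rw [hR1, hR2]; linarith
  -- (k2) f values are close
  have hk2 : ∀ p ∈ Bn, dist (f p) (f (qm p)) < η' := by
    intro p hp
    obtain ⟨h1, h2, h3⟩ := hqmspec p (hBndom p hp)
    refine hδ' p (qm p) h2.symm ?_
    rw [dist_eq_norm]
    calc ‖p.1 - (qm p).1‖ ≤ Real.sqrt d * (ε / 2) := by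
          refine norm_le_sqrt_mul _ (by positivity) fun j => ?_
          rw [coord_sub]
          exact (h3 j).le
    _ < δ := hεδ
  -- (k3) injectivity
  have hk3 : ∀ p ∈ hBnfin.toFinset, ∀ p' ∈ hBnfin.toFinset, qm p = qm p' → p = p' := by
    intro p hp p' hp' heq
    rw [Set.Finite.mem_toFinset] at hp hp'
    obtain ⟨-, -, h3⟩ := hqmspec p (hBndom p hp)
    obtain ⟨-, -, h3'⟩ := hqmspec p' (hBndom p' hp')
    refine UDc.eq hr (hΛs n) hp.1 hp'.1 fun j => ?_
    have ha := h3 j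
    have hb := h3' j
    rw [heq] at ha
    calc |p.1 j - p'.1 j| = |(p.1 j - (qm p').1 j) - (p'.1 j - (qm p').1 j)| := by ring_nf
    _ ≤ |p.1 j - (qm p').1 j| + |p'.1 j - (qm p').1 j| := abs_sub _ _
    _ < ε / 2 + ε / 2 := add_lt_add ha hb
    _ ≤ r / 2 := by linarith
  -- (k4) points of B' outside the image have f = 0
  have hk4 : ∀ q ∈ hB'fin.toFinset, q ∉ Finset.image qm hBnfin.toFinset → f q = 0 := by
    intro q hq hqim
    rw [Set.Finite.mem_toFinset] at hq
    by_contra hfq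
    -- q is in the support, hence matched by a point of Λs n
    have hq0 : ∀ j, |q.1 j| ≤ c := hsupp q hfq
    have hqR2 : q ∈ restc (cube d R2) Λ := ⟨hq.1, fun j =>
      lt_of_le_of_lt (hq0 j) (by rw [hR2]; linarith)⟩
    obtain ⟨b, hb, p0, hp0, hqeq⟩ := hB'2 hqR2
    have hp0c : ∀ j, |q.1 j - p0.1 j| < ε / 2 := by
      intro j
      have h6 : q.1 j - p0.1 j = b j := by
        rw [hqeq]
        show (b + p0.1) j - p0.1 j = b j
        rw [coord_add]; ring
      rw [h6]
      exact hb j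
    have hp0Bn : p0 ∈ Bn := by
      refine ⟨hp0, fun j => ?_⟩
      have := hp0c j
      have := hq0 j
      have habs := abs_sub_abs_le_abs_sub (p0.1 j) (q.1 j)
      rw [abs_sub_comm] at habs
      calc |p0.1 j| ≤ |q.1 j| + |q.1 j - p0.1 j| := by
            have := abs_sub_abs_le_abs_sub (p0.1 j) (q.1 j)
            have h7 : |p0.1 j| - |q.1 j| ≤ |p0.1 j - q.1 j| := this
            rw [abs_sub_comm] at h7
            linarith
      _ < c + ε / 2 := by
            have := hp0c j
            have := hq0 j
            linarith
      _ < R1 / 2 := by rw [hR1]; linarith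
    -- qm p0 = q
    obtain ⟨h1, h2, h3⟩ := hqmspec p0 (hBndom p0 hp0Bn)
    have hqq : qm p0 = q := by
      refine UDc.eq hr hΛ h1 hq.1 fun j => ?_
      have ha := h3 j
      have hbj := hp0c j
      calc |(qm p0).1 j - q.1 j| = |(p0.1 j - q.1 j) - (p0.1 j - (qm p0).1 j)| := by ring_nf
      _ ≤ |p0.1 j - q.1 j| + |p0.1 j - (qm p0).1 j| := abs_sub _ _
      _ < ε / 2 + ε / 2 := by
            rw [abs_sub_comm] at hbj
            exact add_lt_add hbj ha
      _ ≤ r / 2 := by linarith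
    apply hqim
    rw [Finset.mem_image]
    exact ⟨p0, (hBnfin.mem_toFinset).2 hp0Bn, hqq⟩
  -- final estimate
  have hsumeq : ∑ q ∈ hB'fin.toFinset, f q = ∑ p ∈ hBnfin.toFinset, f (qm p) := by
    rw [← Finset.sum_image hk3]
    refine (Finset.sum_subset ?_ hk4).symm
    intro q hq
    rw [Finset.mem_image] at hq
    obtain ⟨p, hp, rfl⟩ := hq
    rw [Set.Finite.mem_toFinset] at hp ⊢
    exact hk1 p hp
  rw [hsum1, hsum2, hsumeq, dist_eq_norm, ← Finset.sum_sub_distrib]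
  calc ‖∑ p ∈ hBnfin.toFinset, (f p - f (qm p))‖
      ≤ ∑ p ∈ hBnfin.toFinset, ‖f p - f (qm p)‖ := norm_sum_le _ _
  _ ≤ ∑ _p ∈ hBnfin.toFinset, η' := by
      refine Finset.sum_le_sum fun p hp => ?_
      rw [← dist_eq_norm]
      exact (hk2 p ((hBnfin.mem_toFinset).1 hp)).le
  _ = hBnfin.toFinset.card * η' := by rw [Finset.sum_const, nsmul_eq_mul]
  _ ≤ M * η' := by
      have hcard : hBnfin.toFinset.card = Bn.ncard := (Set.ncard_eq_toFinset_card _ hBnfin).symm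
      have : (hBnfin.toFinset.card : ℝ) ≤ M := by
        rw [hcard]
        exact_mod_cast hBncard
      exact mul_le_mul_of_nonneg_right this hη'pos.le
  _ < η := by
      rw [hη']
      calc (M:ℝ) * (η / (2 * ((M:ℝ) + 1)))
          < (2 * ((M:ℝ) + 1)) * (η / (2 * ((M:ℝ) + 1))) := by
            refine mul_lt_mul_of_pos_right ?_ (by positivity)
            linarith
      _ = η := by field_simp


/-- For `r`-uniformly discrete coloured point sets, vague convergence of the
associated point measures is equivalent to convergence in the local topology. -/
theorem vague_iff_local {d m : ℕ} (hd : 0 < d) (hm : 0 < m) {r : ℝ} (hr : 0 < r)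
    (Λs : ℕ → Set (Em d m)) (Λ : Set (Em d m))
    (hΛs : ∀ n, UDc r (Λs n)) (hΛ : UDc r Λ) :
    (∀ f : Em d m → ℂ, Continuous f → HasCompactSupport f →
        Tendsto (fun n => ∑' p : (Λs n), f (p : Em d m)) atTop (𝓝 (∑' p : Λ, f (p : Em d m))))
    ↔ (∀ R > (0 : ℝ), ∀ ε > (0 : ℝ), ∃ N : ℕ, ∀ n ≥ N,
        restc (cube d R) (Λs n) ⊆ addc (cube d ε) Λ ∧
        restc (cube d R) Λ ⊆ addc (cube d ε) (Λs n)) := by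
  constructor
  · intro hv R hR ε hε
    set ε0 : ℝ := min ε r / 2 with hε0
    have hmin : 0 < min ε r := lt_min hε hr
    have hε0pos : 0 < ε0 := by rw [hε0]; linarith
    have hε0r : ε0 ≤ r / 2 := by
      rw [hε0]
      have := min_le_right ε r
      linarith
    have hε0ε : ε0 ≤ ε := by
      rw [hε0]
      have := min_le_left ε r
      linarith
    have hA := partA hr hΛ hv R ε0 hε0pos hε0r
    have hB := partB hr hΛs hΛ hv R ε0 hR hε0pos hε0r
    obtain ⟨N, hN⟩ := eventually_atTop.1 (hB.and hA)
    refine ⟨N, fun n hn => ?_⟩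
    obtain ⟨h1, h2⟩ := hN n hn
    exact ⟨h1.trans (addc_mono (cube_mono hε0ε) Λ),
      h2.trans (addc_mono (cube_mono hε0ε) (Λs n))⟩
  · intro hloc
    exact backward hm hr hΛs hΛ hloc
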